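/- Let 0 ≤ α < 1, β ≥ 0, γ ≥ 0 with β + γ > 0, and let p, n be positive integers. If f is analytic on the open unit disk D with f(z) = z^p + a_{n+p} z^{n+p} + ⋯ and |f'(z)/(p z^{p−1}) − 1|^β · |f''(z)/z^{p−2} − (p−1) f'(z)/z^{p−1}|^γ < (pn)^γ |1−α|^{β+γ} for all z ∈ D, then |f'(z)/(p z^{p−1}) − 1| < 1 − α for all z ∈ D. -/

import Mathlib

open Complex Metric Filter Set

lemma jack_aux (n : ℕ) (hn : 1 ≤ n) (b : ℂ → ℂ) (hb : DifferentiableOn ℂ b (ball 0 1))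
    (z0 : ℂ) (r : ℝ) (hr : r < 1) (hz0r : ‖z0‖ ≤ r)
    (hM : 0 < ‖z0 ^ n * b z0‖)
    (hmax : ∀ z ∈ closedBall (0:ℂ) r, ‖z ^ n * b z‖ ≤ ‖z0 ^ n * b z0‖) :
    (n : ℝ) * ‖z0 ^ n * b z0‖
      ≤ ‖z0 * deriv (fun z => z ^ n * b z) z0‖ := by
  set w : ℂ → ℂ := fun z => z ^ n * b z with hw_def
  set M : ℝ := ‖w z0‖ with hM_def
  have hwz0ne : w z0 ≠ 0 := by
    intro h
    have h2 := hM
    rw [hM_def, h] at h2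
    simp at h2
  have hz0ne : z0 ≠ 0 := by
    intro h
    apply hwz0ne
    simp [hw_def, h, zero_pow (by omega : n ≠ 0)]
  have hρpos : 0 < ‖z0‖ := by simpa using hz0ne
  have hρr : ‖z0‖ ≤ r := hz0r
  have hz0ball : z0 ∈ ball (0:ℂ) 1 := by
    simp only [mem_ball, dist_zero_right]; linarith
  have hw : DifferentiableOn ℂ w (ball 0 1) :=
    (differentiableOn_pow n).mul hb
  -- F and G
  set F : ℂ → ℂ := fun ζ => w (z0 * ζ) / w z0 with hF_def
  set G : ℂ → ℂ := fun ζ => z0 ^ n * b (z0 * ζ) / w z0 with hG_def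
  have hFG : ∀ ζ : ℂ, F ζ = ζ ^ n * G ζ := by
    intro ζ
    simp only [hF_def, hG_def, hw_def, mul_pow]
    ring
  have hF1 : F 1 = 1 := by simp [hF_def, div_self hwz0ne]
  have hmem : ∀ ζ : ℂ, ζ ∈ closedBall (0:ℂ) 1 → z0 * ζ ∈ closedBall (0:ℂ) r := by
    intro ζ hζ
    simp only [mem_closedBall, dist_zero_right] at *
    calc ‖z0 * ζ‖ = ‖z0‖ * ‖ζ‖ := norm_mul _ _
    _ ≤ r * 1 := by
        apply mul_le_mul hρr hζ (norm_nonneg _) (by linarith)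
    _ = r := mul_one r
  have hFle : ∀ ζ ∈ closedBall (0:ℂ) 1, ‖F ζ‖ ≤ 1 := by
    intro ζ hζ
    simp only [hF_def, norm_div]
    rw [div_le_one hM]
    exact hmax _ (hmem ζ hζ)
  have hmem' : ∀ ζ : ℂ, ζ ∈ closedBall (0:ℂ) 1 → z0 * ζ ∈ ball (0:ℂ) 1 := by
    intro ζ hζ
    have := hmem ζ hζ
    simp only [mem_closedBall, mem_ball, dist_zero_right] at *
    linarith
  have hGdiff : DifferentiableOn ℂ G (closedBall 0 1) := by
    intro ζ hζ
    have hbd : DifferentiableAt ℂ b (z0 * ζ) :=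
      hb.differentiableAt (isOpen_ball.mem_nhds (hmem' ζ hζ))
    have : DifferentiableAt ℂ G ζ := by
      apply DifferentiableAt.div_const
      exact (hbd.comp ζ ((differentiableAt_const z0).mul differentiableAt_id)).const_mul _
    exact this.differentiableWithinAt
  have hGle : ∀ ζ ∈ closedBall (0:ℂ) 1, ‖G ζ‖ ≤ 1 := by
    intro ζ hζ
    have hcl : closure (ball (0:ℂ) 1) = closedBall 0 1 := closure_ball 0 one_ne_zero
    have hdc : DiffContOnCl ℂ G (ball 0 1) := by
      apply DifferentiableOn.diffContOnCl
      rw [hcl]; exact hGdiff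
    have := norm_le_of_forall_mem_frontier_norm_le (isBounded_ball) hdc
      (C := 1) ?_ (z := ζ) (by rw [hcl]; exact hζ)
    · simpa using this
    · intro x hx
      rw [frontier_ball 0 one_ne_zero] at hx
      simp only [mem_sphere_iff_norm, sub_zero] at hx
      have hx1 : x ∈ closedBall (0:ℂ) 1 := by
        simp [mem_closedBall, dist_zero_right, hx.le]
      have := hFle x hx1
      rw [hFG x] at this
      rw [norm_mul, norm_pow, hx, one_pow, one_mul] at this
      simpa using this
  have hFt : ∀ t : ℝ, t ∈ Set.Ioo (0:ℝ) 1 → ‖F t‖ ≤ t ^ n := by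
    intro t ht
    have ht1 : (t:ℂ) ∈ closedBall (0:ℂ) 1 := by
      simp only [mem_closedBall, dist_zero_right, Complex.norm_real, Real.norm_eq_abs]
      rw [abs_of_pos ht.1]; exact ht.2.le
    have := hGle t ht1
    rw [hFG t, norm_mul, norm_pow]
    calc ‖(t:ℂ)‖ ^ n * ‖G t‖ ≤ ‖(t:ℂ)‖ ^ n * 1 := by
          apply mul_le_mul_of_nonneg_left this (by positivity)
    _ = t ^ n := by
          rw [mul_one, Complex.norm_real, Real.norm_eq_abs, abs_of_pos ht.1]
  -- derivative of F at 1
  have hwz0 : DifferentiableAt ℂ w z0 := hw.differentiableAt (isOpen_ball.mem_nhds hz0ball)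
  set c : ℂ := deriv w z0 * z0 / w z0 with hc_def
  have hFd : HasDerivAt F c 1 := by
    have h1 : HasDerivAt (fun ζ : ℂ => z0 * ζ) z0 1 := by
      simpa using (hasDerivAt_id (1:ℂ)).const_mul z0
    have h2 : HasDerivAt w (deriv w z0) (z0 * 1) := by
      rw [mul_one]; exact hwz0.hasDerivAt
    have h3 := (h2.comp 1 h1).div_const (w z0)
    exact h3
  have hφd : HasDerivAt (fun t : ℝ => (F t).re) c.re 1 := by
    have h1 : HasDerivAt F c ((1:ℝ):ℂ) := by simpa using hFd
    have h2 := h1.comp_ofReal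
    exact (Complex.reCLM.hasFDerivAt.comp_hasDerivAt 1 h2)
  have hψd : HasDerivAt (fun t : ℝ => t ^ n) (n : ℝ) 1 := by
    simpa using hasDerivAt_pow n (1:ℝ)
  have hsub : Set.Iio (1:ℝ) ⊆ {(1:ℝ)}ᶜ := fun x hx => ne_of_lt hx
  have l1 : Tendsto (slope (fun t : ℝ => (F t).re) 1) (nhdsWithin 1 (Set.Iio 1)) (nhds c.re) :=
    (hasDerivAt_iff_tendsto_slope.mp hφd).mono_left (nhdsWithin_mono _ hsub)
  have l2 : Tendsto (slope (fun t : ℝ => t ^ n) 1) (nhdsWithin 1 (Set.Iio 1)) (nhds (n:ℝ)) :=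
    (hasDerivAt_iff_tendsto_slope.mp hψd).mono_left (nhdsWithin_mono _ hsub)
  have hnc : (n : ℝ) ≤ c.re := by
    apply le_of_tendsto_of_tendsto l2 l1
    filter_upwards [Ioo_mem_nhdsLT_of_mem (⟨zero_lt_one, le_refl (1:ℝ)⟩ : (1:ℝ) ∈ Set.Ioc 0 1)]
      with t ht
    have ht1 : t - 1 < 0 := by linarith [ht.2]
    rw [slope_def_field, slope_def_field]
    rw [div_le_div_right_of_neg ht1]
    have : (F t).re ≤ t ^ n := le_trans (Complex.re_le_norm _) (hFt t ht)
    have hF1' : (F ((1:ℝ):ℂ)).re = 1 := by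
      push_cast; rw [hF1]; simp
    rw [hF1', one_pow]
    linarith
  -- conclude
  have hcabs : c.re ≤ ‖c‖ := Complex.re_le_norm c
  have key : c * w z0 = deriv w z0 * z0 := by
    rw [hc_def, div_mul_cancel₀ _ hwz0ne]
  calc (n:ℝ) * ‖z0 ^ n * b z0‖ = (n:ℝ) * M := rfl
  _ ≤ ‖c‖ * M := by
      apply mul_le_mul_of_nonneg_right (le_trans hnc hcabs) (norm_nonneg _)
  _ = ‖c * w z0‖ := by rw [norm_mul]
  _ = ‖z0 * deriv w z0‖ := by rw [key, mul_comm]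
theorem stmt_3 (α β γ : ℝ) (hα0 : 0 ≤ α) (hα1 : α < 1) (hβ : 0 ≤ β) (hγ : 0 ≤ γ)
    (hβγ : 0 < β + γ) (p n : ℕ) (hp : 1 ≤ p) (hn : 1 ≤ n)
    (f a : ℂ → ℂ) (hf : DifferentiableOn ℂ f (ball 0 1))
    (ha : DifferentiableOn ℂ a (ball 0 1))
    (hform : ∀ z ∈ ball (0:ℂ) 1, f z = z ^ p + z ^ (n + p) * a z)
    (hineq : ∀ z ∈ ball (0:ℂ) 1, z ≠ 0 →
      ‖deriv f z / (p * z ^ ((p : ℤ) - 1)) - 1‖ ^ β *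
        ‖deriv (deriv f) z / z ^ ((p : ℤ) - 2) -
          (p - 1) * deriv f z / z ^ ((p : ℤ) - 1)‖ ^ γ <
        ((p * n : ℝ)) ^ γ * |1 - α| ^ (β + γ)) :
    ∀ z ∈ ball (0:ℂ) 1, z ≠ 0 →
      ‖deriv f z / (p * z ^ ((p : ℤ) - 1)) - 1‖ < 1 - α := by
  obtain ⟨q, rfl⟩ : ∃ q, p = q + 1 := ⟨p - 1, by omega⟩
  have hpC : ((q + 1 : ℕ) : ℂ) ≠ 0 := Nat.cast_ne_zero.mpr (by omega)
  have hq1 : ((q : ℂ) + 1) ≠ 0 := by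
    rw [show ((q : ℂ) + 1) = ((q + 1 : ℕ) : ℂ) by push_cast; ring]; exact hpC
  have hda : DifferentiableOn ℂ (deriv a) (ball 0 1) :=
    ((ha.analyticOnNhd isOpen_ball).deriv).differentiableOn
  set b : ℂ → ℂ := fun z => (((n + (q + 1) : ℕ) : ℂ) * a z + z * deriv a z) / ((q + 1 : ℕ) : ℂ)
    with hb_def
  set w : ℂ → ℂ := fun z => z ^ n * b z with hw_def
  have hbd : DifferentiableOn ℂ b (ball 0 1) := by
    apply DifferentiableOn.div_const
    exact (ha.const_mul _).add ((differentiableOn_id).mul hda)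
  have hwd : DifferentiableOn ℂ w (ball 0 1) := (differentiableOn_pow n).mul hbd
  -- first derivative formula
  have hDf : ∀ z ∈ ball (0:ℂ) 1,
      deriv f z = ((q + 1 : ℕ) : ℂ) * (z ^ q * (1 + w z)) := by
    intro z hz
    have hfz : f =ᶠ[nhds z] fun y => y ^ (q + 1) + y ^ (n + (q + 1)) * a y := by
      filter_upwards [isOpen_ball.mem_nhds hz] with y hy using hform y hy
    have hA : HasDerivAt (fun y : ℂ => y ^ (q + 1) + y ^ (n + (q + 1)) * a y)
        (((q + 1 : ℕ) : ℂ) * z ^ ((q + 1) - 1) +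
          (((n + (q + 1) : ℕ) : ℂ) * z ^ (n + (q + 1) - 1) * a z
            + z ^ (n + (q + 1)) * deriv a z)) z := by
      exact (hasDerivAt_pow (q + 1) z).add ((hasDerivAt_pow (n + (q + 1)) z).mul
        (ha.differentiableAt (isOpen_ball.mem_nhds hz)).hasDerivAt)
    rw [hfz.deriv_eq, hA.deriv]
    have e1 : (q + 1) - 1 = q := by omega
    have e2 : n + (q + 1) - 1 = n + q := by omega
    rw [e1, e2]
    simp only [hw_def, hb_def]
    field_simp [hq1]
    ring
  -- second derivative formula
  have hDDf : ∀ z ∈ ball (0:ℂ) 1,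
      deriv (deriv f) z = ((q + 1 : ℕ) : ℂ) *
        ((q : ℂ) * z ^ (q - 1) * (1 + w z) + z ^ q * deriv w z) := by
    intro z hz
    have hfz : deriv f =ᶠ[nhds z] fun y => ((q + 1 : ℕ) : ℂ) * (y ^ q * (1 + w y)) := by
      filter_upwards [isOpen_ball.mem_nhds hz] with y hy using hDf y hy
    have hwAt : HasDerivAt w (deriv w z) z :=
      (hwd.differentiableAt (isOpen_ball.mem_nhds hz)).hasDerivAt
    have hA : HasDerivAt (fun y : ℂ => ((q + 1 : ℕ) : ℂ) * (y ^ q * (1 + w y)))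
        (((q + 1 : ℕ) : ℂ) *
          ((q : ℂ) * z ^ (q - 1) * (1 + w z) + z ^ q * (0 + deriv w z))) z := by
      exact ((hasDerivAt_pow q z).mul ((hasDerivAt_const z 1).add hwAt)).const_mul _
    rw [hfz.deriv_eq, hA.deriv]
    ring
  -- rewrite the first modulus expression
  have hwz : ∀ z ∈ ball (0:ℂ) 1, z ≠ 0 →
      deriv f z / (((q + 1 : ℕ) : ℂ) * z ^ (((q + 1 : ℕ) : ℤ) - 1)) - 1 = w z := by
    intro z hz hz0
    have e1 : z ^ ((((q + 1 : ℕ)) : ℤ) - 1) = z ^ q := by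
      rw [show ((((q + 1 : ℕ)) : ℤ) - 1) = (q : ℤ) by push_cast; ring, zpow_natCast]
    rw [hDf z hz, e1]
    have hzq : z ^ q ≠ 0 := pow_ne_zero _ hz0
    field_simp [hq1]
    ring
  -- rewrite the second modulus expression
  have hE : ∀ z ∈ ball (0:ℂ) 1, z ≠ 0 →
      deriv (deriv f) z / z ^ (((q + 1 : ℕ) : ℤ) - 2) -
          (((q + 1 : ℕ) : ℂ) - 1) * deriv f z / z ^ (((q + 1 : ℕ) : ℤ) - 1)
        = ((q + 1 : ℕ) : ℂ) * (z * deriv w z) := by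
    intro z hz hz0
    have e1 : z ^ ((((q + 1 : ℕ)) : ℤ) - 1) = z ^ q := by
      rw [show ((((q + 1 : ℕ)) : ℤ) - 1) = (q : ℤ) by push_cast; ring, zpow_natCast]
    have e2 : z ^ ((((q + 1 : ℕ)) : ℤ) - 2) = z ^ q * z⁻¹ := by
      rw [show ((((q + 1 : ℕ)) : ℤ) - 2) = ((q : ℤ)) - 1 by push_cast; ring,
        zpow_sub_one₀ hz0, zpow_natCast]
    have e3 : (((q + 1 : ℕ) : ℂ) - 1) = (q : ℂ) := by push_cast; ring
    rw [hDf z hz, hDDf z hz, e1, e2, e3]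
    have hzq : z ^ q ≠ 0 := pow_ne_zero _ hz0
    cases q with
    | zero => simp only [Nat.cast_zero, zero_mul, pow_zero, zero_add]; field_simp [hq1]; ring
    | succ k =>
        have e4 : k + 1 - 1 = k := by omega
        rw [e4]
        field_simp [hq1]
        ring
  -- main argument
  intro z hz hz0
  rw [hwz z hz hz0]
  by_contra hcon
  push_neg at hcon
  set s : ℝ := 1 - α with hs_def
  have hspos : 0 < s := by rw [hs_def]; linarith
  set r : ℝ := ‖z‖ with hr_def
  have hrpos : 0 < r := by simpa [hr_def] using hz0
  have hr1 : r < 1 := by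
    simpa [hr_def, mem_ball, dist_zero_right] using hz
  have hsub : closedBall (0:ℂ) r ⊆ ball 0 1 := by
    apply closedBall_subset_ball; linarith
  have hcont : ContinuousOn (fun y => ‖w y‖) (closedBall (0:ℂ) r) :=
    continuous_norm.comp_continuousOn ((hwd.mono hsub).continuousOn)
  obtain ⟨z0, hz0mem, hz0max⟩ := (isCompact_closedBall (0:ℂ) r).exists_isMaxOn
    ⟨0, by simp [hrpos.le]⟩ hcont
  have hzmem : z ∈ closedBall (0:ℂ) r := by
    simp [mem_closedBall, dist_zero_right, hr_def]
  have hsM : s ≤ ‖w z0‖ := le_trans hcon (hz0max hzmem)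
  have hMpos : 0 < ‖w z0‖ := lt_of_lt_of_le hspos hsM
  have hz0r : ‖z0‖ ≤ r := by
    simpa [mem_closedBall, dist_zero_right] using hz0mem
  have hz0ball : z0 ∈ ball (0:ℂ) 1 := hsub hz0mem
  have hz0ne : z0 ≠ 0 := by
    intro h
    rw [h] at hMpos
    simp [hw_def, zero_pow (by omega : n ≠ 0)] at hMpos
  -- Jack's lemma
  have hjack := jack_aux n hn b hbd z0 r hr1 hz0r (by simpa [hw_def] using hMpos)
    (fun y hy => hz0max hy)
  have h1 := hineq z0 hz0ball hz0ne
  rw [hwz z0 hz0ball hz0ne, hE z0 hz0ball hz0ne] at h1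
  rw [show ‖((q + 1 : ℕ) : ℂ) * (z0 * deriv w z0)‖
      = ((q + 1 : ℕ) : ℝ) * ‖z0 * deriv w z0‖ by
    rw [norm_mul, Complex.norm_natCast], abs_of_pos hspos] at h1
  have hjack' : (n : ℝ) * ‖w z0‖ ≤ ‖z0 * deriv w z0‖ := hjack
  set A : ℝ := ‖w z0‖ with hA_def
  set B : ℝ := ‖z0 * deriv w z0‖ with hB_def
  set P : ℝ := ((q + 1 : ℕ) : ℝ) with hP_def
  have hPpos : (0:ℝ) < P := by rw [hP_def]; exact_mod_cast Nat.succ_pos q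
  have hNpos : (0:ℝ) < (n:ℝ) := by exact_mod_cast hn
  have hAnn : (0:ℝ) ≤ A := norm_nonneg _
  have hBnn : (0:ℝ) ≤ B := norm_nonneg _
  have hns : (n:ℝ) * s ≤ B := by nlinarith
  have h2 : P * (n:ℝ) * s ≤ P * B := by nlinarith
  have key : (P * (n:ℝ)) ^ γ * s ^ (β + γ) ≤ A ^ β * (P * B) ^ γ := by
    rw [Real.rpow_add hspos]
    calc (P * (n:ℝ)) ^ γ * (s ^ β * s ^ γ) = s ^ β * ((P * (n:ℝ)) ^ γ * s ^ γ) := by ring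
    _ = s ^ β * (P * (n:ℝ) * s) ^ γ := by
        rw [← Real.mul_rpow (by positivity) hspos.le]
    _ ≤ A ^ β * (P * B) ^ γ := by
        apply mul_le_mul (Real.rpow_le_rpow hspos.le hsM hβ)
          (Real.rpow_le_rpow (by positivity) h2 hγ)
          (Real.rpow_nonneg (by positivity) _)
          (Real.rpow_nonneg hAnn _)
  exact absurd h1 (not_lt.mpr key)
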